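/- Let m ≥ 1 and let λ_1,…,λ_m be complex numbers such that λ_1³,…,λ_m³ are nonzero and pairwise distinct, and set f(z) = ∏_{j=1}^m (1−λ_j³ z³) ∈ ℂ((z)). Consider the two families in ℂ((z)): S₁ = {z^{3m−3i} : i ≥ 0} ∪ {z^{−1−3i} f(z) : i ≥ 0} ∪ {z^{−3m−2−3i} f(z)² : i ≥ 0}, and S₂ = {z^{3m−3i} : 0 ≤ i ≤ m−1} ∪ {z^{−3i} f(z) : 0 ≤ i ≤ m−1} ∪ {z^{−3i−1} f(z) : 0 ≤ i ≤ m−1} ∪ {z^{−3m−i} f(z)² : i ≥ 0}. Then S₂ is linearly independent over ℂ and the ℂ-linear span of S₂ equals the ℂ-linear span of S₁. -/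

import Mathlib

set_option synthInstance.maxHeartbeats 400000
set_option maxHeartbeats 1000000

noncomputable section

/-- The variable `z` in the field of formal Laurent series `ℂ((z))`. -/
def zL : LaurentSeries ℂ := HahnSeries.single 1 1

/-- `f(z) = ∏_{j=1}^m (1 - λ_j³ z³)` in `ℂ((z))`. -/
def fSing (m : ℕ) (lam : Fin m → ℂ) : LaurentSeries ℂ :=
  ∏ j : Fin m, (1 - algebraMap ℂ (LaurentSeries ℂ) (lam j ^ 3) * zL ^ 3)

/-- The basis (9.4) of `ι(U_a(X^aff_sing))`:
`z^{3m-3i}`, `z^{-1-3i}f(z)`, `z^{-3m-2-3i}f(z)²` for `i ≥ 0`. -/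
def S1 (m : ℕ) (lam : Fin m → ℂ) : Set (LaurentSeries ℂ) :=
  (Set.range fun i : ℕ => zL ^ (3 * (m : ℤ) - 3 * (i : ℤ))) ∪
    (Set.range fun i : ℕ => zL ^ (-1 - 3 * (i : ℤ)) * fSing m lam) ∪
    (Set.range fun i : ℕ => zL ^ (-3 * (m : ℤ) - 2 - 3 * (i : ℤ)) * fSing m lam ^ 2)

/-- The family (9.5): `z^{3m-3i}`, `z^{-3i}f(z)`, `z^{-3i-1}f(z)` for
`0 ≤ i ≤ m-1` and `z^{-3m-i}f(z)²` for `i ≥ 0`. -/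
def S2 (m : ℕ) (lam : Fin m → ℂ) :
    (Fin m ⊕ Fin m ⊕ Fin m ⊕ ℕ) → LaurentSeries ℂ :=
  Sum.elim (fun i => zL ^ (3 * (m : ℤ) - 3 * (i : ℤ)))
    (Sum.elim (fun i => zL ^ (-3 * (i : ℤ)) * fSing m lam)
      (Sum.elim (fun i => zL ^ (-3 * (i : ℤ) - 1) * fSing m lam)
        (fun i => zL ^ (-3 * (m : ℤ) - (i : ℤ)) * fSing m lam ^ 2)))

/- ### Auxiliary lemmas -/

lemma zL_ne_zero : zL ≠ 0 := HahnSeries.single_ne_zero one_ne_zero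

lemma zL_zpow (n : ℤ) : zL ^ n = HahnSeries.single n (1 : ℂ) := by
  rw [zL]; exact (RatFunc.single_zpow n).symm

lemma zL_zpow_ne_zero (n : ℤ) : zL ^ n ≠ 0 := zpow_ne_zero n zL_ne_zero

lemma order_zL_zpow (n : ℤ) : (zL ^ n).order = n := by
  rw [zL_zpow]; exact HahnSeries.order_single one_ne_zero

lemma zpow_mul_zpow (a b : ℤ) : zL ^ a * zL ^ b = zL ^ (a + b) := (zpow_add₀ zL_ne_zero a b).symm

lemma smul_eq_single_mul (a : ℂ) (x : LaurentSeries ℂ) :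
    a • x = HahnSeries.single (0 : ℤ) a * x := (HahnSeries.single_zero_mul_eq_smul).symm

lemma mul_smul_comm' (a : ℂ) (x y : LaurentSeries ℂ) : x * (a • y) = a • (x * y) := by
  rw [smul_eq_single_mul, smul_eq_single_mul]; ring

lemma smul_mul_assoc' (a : ℂ) (x y : LaurentSeries ℂ) : (a • x) * y = a • (x * y) := by
  rw [smul_eq_single_mul, smul_eq_single_mul]; ring

lemma coeff_sum {α : Type*} (s : Finset α) (f : α → LaurentSeries ℂ) (n : ℤ) :
    (∑ i ∈ s, f i).coeff n = ∑ i ∈ s, (f i).coeff n :=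
  map_sum (HahnSeries.coeff.linearMap (R := ℂ) n) f s

lemma alg_smul_eq (a : ℂ) (x : LaurentSeries ℂ) :
    @HSMul.hSMul ℂ _ _ (@instHSMul ℂ _ Algebra.toSMul) a x = a • x := by
  rw [show @HSMul.hSMul ℂ _ _ (@instHSMul ℂ _ Algebra.toSMul) a x
      = algebraMap ℂ (LaurentSeries ℂ) a * x from rfl,
    HahnSeries.algebraMap_apply', show algebraMap ℂ (PowerSeries ℂ) a = PowerSeries.C a from rfl,
    HahnSeries.ofPowerSeries_C, HahnSeries.C_apply, HahnSeries.single_zero_mul_eq_smul]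

lemma fSing_rep (m : ℕ) (lam : Fin m → ℂ) :
    ∃ c : ℕ → ℂ, c 0 = 1 ∧ fSing m lam = ∑ k ∈ Finset.range (m + 1), c k • zL ^ (3 * (k : ℤ)) := by
  classical
  set p : Polynomial ℂ := ∏ j : Fin m, (1 - Polynomial.C (lam j ^ 3) * Polynomial.X) with hp
  have hdeg : p.natDegree < m + 1 := by
    have h2 : ∀ j : Fin m, (1 - Polynomial.C (lam j ^ 3) * Polynomial.X).natDegree ≤ 1 := by
      intro j
      refine le_trans (Polynomial.natDegree_sub_le _ _) (max_le (by simp) ?_)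
      exact le_trans (Polynomial.natDegree_C_mul_le _ _) (le_of_eq (Polynomial.natDegree_X (R := ℂ)))
    have h3 : p.natDegree ≤ ∑ _j : Fin m, 1 :=
      le_trans (Polynomial.natDegree_prod_le _ _) (Finset.sum_le_sum fun j _ => h2 j)
    have h4 : p.natDegree ≤ m := by simpa using h3
    omega
  have hc0 : p.coeff 0 = 1 := by
    rw [Polynomial.coeff_zero_eq_eval_zero, hp, Polynomial.eval_prod]
    simp
  have hval : fSing m lam = Polynomial.aeval (zL ^ 3) p := by
    rw [fSing, hp, map_prod]
    refine Finset.prod_congr rfl fun j _ => ?_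
    simp [Polynomial.aeval_X, Algebra.smul_def]
  refine ⟨p.coeff, hc0, ?_⟩
  rw [hval, Polynomial.aeval_eq_sum_range' hdeg]
  simp only [alg_smul_eq]
  refine Finset.sum_congr rfl fun k _ => ?_
  have h : (zL ^ 3) ^ k = zL ^ (3 * (k : ℤ)) := by
    rw [← pow_mul, ← zpow_natCast zL (3 * k)]
    norm_num
  exact congrArg (fun y => p.coeff k • y) h

section Rep

variable {m : ℕ} {F : LaurentSeries ℂ} {c : ℕ → ℂ}

lemma rep_coeff_zero (hc0 : c 0 = 1)
    (hF : F = ∑ k ∈ Finset.range (m + 1), c k • zL ^ (3 * (k : ℤ))) : F.coeff 0 = 1 := by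
  rw [hF, coeff_sum, Finset.sum_eq_single 0]
  · rw [HahnSeries.coeff_smul, zL_zpow, hc0]
    norm_num
  · intro k _ hk
    rw [HahnSeries.coeff_smul, zL_zpow, HahnSeries.coeff_single_of_ne (by omega), smul_zero]
  · intro h
    exact absurd (Finset.mem_range.mpr (Nat.succ_pos m)) h

lemma rep_coeff_neg (hF : F = ∑ k ∈ Finset.range (m + 1), c k • zL ^ (3 * (k : ℤ)))
    {n : ℤ} (hn : n < 0) : F.coeff n = 0 := by
  rw [hF, coeff_sum]
  exact Finset.sum_eq_zero fun k _ => by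
    rw [HahnSeries.coeff_smul, zL_zpow, HahnSeries.coeff_single_of_ne (by omega), smul_zero]

lemma rep_ne_zero (hc0 : c 0 = 1)
    (hF : F = ∑ k ∈ Finset.range (m + 1), c k • zL ^ (3 * (k : ℤ))) : F ≠ 0 := by
  intro h
  have h1 := rep_coeff_zero hc0 hF
  rw [h] at h1
  simp at h1

lemma rep_order (hc0 : c 0 = 1)
    (hF : F = ∑ k ∈ Finset.range (m + 1), c k • zL ^ (3 * (k : ℤ))) : F.order = 0 := by
  refine le_antisymm (HahnSeries.order_le_of_coeff_ne_zero ?_) (le_of_not_gt fun hlt => ?_)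
  · rw [rep_coeff_zero hc0 hF]
    exact one_ne_zero
  · exact (mt HahnSeries.coeff_order_eq_zero.mp (rep_ne_zero hc0 hF)) (rep_coeff_neg hF hlt)

lemma rep_I1 (hF : F = ∑ k ∈ Finset.range (m + 1), c k • zL ^ (3 * (k : ℤ))) (e : ℤ) :
    zL ^ e * F = ∑ k ∈ Finset.range (m + 1), c k • zL ^ (e + 3 * (k : ℤ)) := by
  rw [hF, Finset.mul_sum]
  exact Finset.sum_congr rfl fun k _ => by rw [mul_smul_comm', zpow_mul_zpow]

lemma rep_I1' (hc0 : c 0 = 1)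
    (hF : F = ∑ k ∈ Finset.range (m + 1), c k • zL ^ (3 * (k : ℤ))) (e : ℤ) :
    zL ^ e * F = (∑ k ∈ Finset.range m, c (k + 1) • zL ^ (e + 3 * (k : ℤ) + 3)) + zL ^ e := by
  rw [rep_I1 hF e, Finset.sum_range_succ']
  congr 1
  · refine Finset.sum_congr rfl fun k _ => ?_
    rw [show e + 3 * (((k + 1 : ℕ)) : ℤ) = e + 3 * (k : ℤ) + 3 from by push_cast; ring]
  · rw [hc0, one_smul, show e + 3 * (((0 : ℕ)) : ℤ) = e from by push_cast; ring]

lemma rep_I2 (hF : F = ∑ k ∈ Finset.range (m + 1), c k • zL ^ (3 * (k : ℤ))) (e : ℤ) :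
    zL ^ e * F ^ 2 = ∑ k ∈ Finset.range (m + 1), c k • (zL ^ (e + 3 * (k : ℤ)) * F) := by
  rw [pow_two, ← mul_assoc, rep_I1 hF e, Finset.sum_mul]
  exact Finset.sum_congr rfl fun k _ => by rw [smul_mul_assoc']

lemma rep_I2' (hc0 : c 0 = 1)
    (hF : F = ∑ k ∈ Finset.range (m + 1), c k • zL ^ (3 * (k : ℤ))) (e : ℤ) :
    zL ^ e * F ^ 2
      = (∑ k ∈ Finset.range m, c (k + 1) • (zL ^ (e + 3 * (k : ℤ) + 3) * F)) + zL ^ e * F := by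
  rw [rep_I2 hF e, Finset.sum_range_succ']
  congr 1
  · refine Finset.sum_congr rfl fun k _ => ?_
    rw [show e + 3 * (((k + 1 : ℕ)) : ℤ) = e + 3 * (k : ℤ) + 3 from by push_cast; ring]
  · rw [hc0, one_smul, show e + 3 * (((0 : ℕ)) : ℤ) = e from by push_cast; ring]

end Rep

/-- Elements of `ℂ((z))` with pairwise distinct orders are linearly independent. -/
lemma li_of_orders {ι : Type*} (x : ι → LaurentSeries ℂ) (hx : ∀ i, x i ≠ 0)
    (hord : Function.Injective fun i => (x i).order) : LinearIndependent ℂ x := by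
  classical
  rw [linearIndependent_iff']
  intro s
  induction s using Finset.strongInductionOn with
  | _ s ih =>
    intro g hsum i hi
    obtain ⟨i₀, hi₀s, hmin⟩ := Finset.exists_min_image s (fun j => (x j).order) ⟨i, hi⟩
    have hco : ∑ j ∈ s, g j * (x j).coeff ((x i₀).order) = 0 := by
      have h1 := congrArg (fun y : LaurentSeries ℂ => y.coeff ((x i₀).order)) hsum
      simpa [coeff_sum, HahnSeries.coeff_smul, smul_eq_mul] using h1
    have hg0 : g i₀ = 0 := by
      rw [Finset.sum_eq_single i₀] at hco
      · rcases mul_eq_zero.mp hco with h | h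
        · exact h
        · exact absurd h (mt HahnSeries.coeff_order_eq_zero.mp (hx i₀))
      · intro j hjs hji
        rw [HahnSeries.coeff_eq_zero_of_lt_order
          (lt_of_le_of_ne (hmin j hjs) fun h => hji (hord h.symm)), mul_zero]
      · exact fun h => absurd hi₀s h
    rcases eq_or_ne i i₀ with rfl | hne
    · exact hg0
    · refine ih (s.erase i₀) (Finset.erase_ssubset hi₀s) g ?_ i (Finset.mem_erase.mpr ⟨hne, hi⟩)
      rw [Finset.sum_erase_eq_sub hi₀s, hsum, hg0]; simp

/-- The order function of the family (9.5) is injective. -/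
lemma ord_inj (m : ℕ) : Function.Injective
    (Sum.elim (fun i : Fin m => 3 * (m : ℤ) - 3 * (i : ℤ))
      (Sum.elim (fun i : Fin m => -3 * (i : ℤ))
        (Sum.elim (fun i : Fin m => -3 * (i : ℤ) - 1)
          (fun n : ℕ => -3 * (m : ℤ) - (n : ℤ))))) := by
  rintro (i | i | i | n) (j | j | j | k) h <;>
    simp only [Sum.elim_inl, Sum.elim_inr] at h <;>
    [skip; skip; skip; skip; skip; skip; skip; skip; skip; skip; skip; skip; skip; skip; skip;
      skip]
  · exact congrArg Sum.inl (Fin.ext (by omega))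
  · exact absurd h (by have := i.isLt; have := j.isLt; omega)
  · exact absurd h (by have := i.isLt; have := j.isLt; omega)
  · exact absurd h (by have := i.isLt; omega)
  · exact absurd h (by have := i.isLt; have := j.isLt; omega)
  · exact congrArg (fun t => Sum.inr (Sum.inl t)) (Fin.ext (by omega))
  · exact absurd h (by have := i.isLt; have := j.isLt; omega)
  · exact absurd h (by have := i.isLt; omega)
  · exact absurd h (by have := i.isLt; have := j.isLt; omega)
  · exact absurd h (by have := i.isLt; have := j.isLt; omega)
  · exact congrArg (fun t => Sum.inr (Sum.inr (Sum.inl t))) (Fin.ext (by omega))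
  · exact absurd h (by have := i.isLt; omega)
  · exact absurd h (by have := j.isLt; omega)
  · exact absurd h (by have := j.isLt; omega)
  · exact absurd h (by have := j.isLt; omega)
  · exact congrArg (fun t => Sum.inr (Sum.inr (Sum.inr t))) (by omega)

/-- Lemma 9.2: the family (9.5) is linearly independent and
spans the same subspace of `ℂ((z))` as the basis (9.4) of
`ι(U_a(X^aff_sing))`. -/
theorem S2_linearIndependent_and_span_eq (m : ℕ) (hm : 1 ≤ m)
    (lam : Fin m → ℂ) (hne : ∀ j, lam j ^ 3 ≠ 0)
    (hinj : Function.Injective fun j => lam j ^ 3) :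
    LinearIndependent ℂ (S2 m lam) ∧
      Submodule.span ℂ (Set.range (S2 m lam)) = Submodule.span ℂ (S1 m lam) := by
  classical
  obtain ⟨c, hc0, hF⟩ := fSing_rep m lam
  have hF0 : fSing m lam ≠ 0 := rep_ne_zero hc0 hF
  have hFord : (fSing m lam).order = 0 := rep_order hc0 hF
  constructor
  · -- Linear independence
    apply li_of_orders
    · rintro (i | i | i | n) <;> simp only [S2, Sum.elim_inl, Sum.elim_inr]
      · exact zL_zpow_ne_zero _
      · exact mul_ne_zero (zL_zpow_ne_zero _) hF0
      · exact mul_ne_zero (zL_zpow_ne_zero _) hF0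
      · exact mul_ne_zero (zL_zpow_ne_zero _) (pow_ne_zero _ hF0)
    · have hords : ∀ p, ((S2 m lam) p).order
          = (Sum.elim (fun i : Fin m => 3 * (m : ℤ) - 3 * (i : ℤ))
              (Sum.elim (fun i : Fin m => -3 * (i : ℤ))
                (Sum.elim (fun i : Fin m => -3 * (i : ℤ) - 1)
                  (fun n : ℕ => -3 * (m : ℤ) - (n : ℤ))))) p := by
        rintro (i | i | i | n) <;> simp only [S2, Sum.elim_inl, Sum.elim_inr]
        · exact order_zL_zpow _
        · rw [HahnSeries.order_mul (zL_zpow_ne_zero _) hF0, order_zL_zpow, hFord, add_zero]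
        · rw [HahnSeries.order_mul (zL_zpow_ne_zero _) hF0, order_zL_zpow, hFord, add_zero]
        · rw [HahnSeries.order_mul (zL_zpow_ne_zero _) (pow_ne_zero _ hF0), order_zL_zpow,
            HahnSeries.order_pow, hFord, smul_zero, add_zero]
      rw [show (fun p => ((S2 m lam) p).order) = _ from funext hords]
      exact ord_inj m
  · -- Span equality
    set W1 := Submodule.span ℂ (S1 m lam) with hW1def
    set W2 := Submodule.span ℂ (Set.range (S2 m lam)) with hW2def
    have g1 : ∀ i : ℕ, zL ^ (3 * (m : ℤ) - 3 * (i : ℤ)) ∈ W1 :=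
      fun i => Submodule.subset_span (Or.inl (Or.inl ⟨i, rfl⟩))
    have g2 : ∀ i : ℕ, zL ^ (-1 - 3 * (i : ℤ)) * fSing m lam ∈ W1 :=
      fun i => Submodule.subset_span (Or.inl (Or.inr ⟨i, rfl⟩))
    have g3 : ∀ i : ℕ, zL ^ (-3 * (m : ℤ) - 2 - 3 * (i : ℤ)) * fSing m lam ^ 2 ∈ W1 :=
      fun i => Submodule.subset_span (Or.inr ⟨i, rfl⟩)
    -- powers of z³ with exponent ≤ 3m lie in W1
    have L1 : ∀ n : ℤ, n ≤ 3 * m → 3 ∣ n → zL ^ n ∈ W1 := by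
      rintro n hn ⟨t, rfl⟩
      have := g1 ((m - t).toNat)
      rwa [show 3 * (m : ℤ) - 3 * (((m - t).toNat : ℕ) : ℤ) = 3 * t from by omega] at this
    -- z^e f ∈ W1 for e ≤ 0 divisible by 3
    have A2 : ∀ e : ℤ, e ≤ 0 → 3 ∣ e → zL ^ e * fSing m lam ∈ W1 := by
      intro e he hdvd
      rw [rep_I1 hF e]
      refine Submodule.sum_mem _ fun k hk => Submodule.smul_mem _ _ (L1 _ ?_ ?_)
      · have := Finset.mem_range.mp hk; omega
      · obtain ⟨t, rfl⟩ := hdvd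
        exact ⟨t + k, by push_cast; ring⟩
    -- fourth family of S2 lies in W1
    have L4 : ∀ n : ℕ, zL ^ (-3 * (m : ℤ) - (n : ℤ)) * fSing m lam ^ 2 ∈ W1 := by
      intro n
      obtain ⟨q, hq⟩ : ∃ q, n = 3 * q ∨ n = 3 * q + 1 ∨ n = 3 * q + 2 := ⟨n / 3, by omega⟩
      rcases hq with rfl | rfl | rfl
      · rw [rep_I2 hF (-3 * (m : ℤ) - ((3 * q : ℕ) : ℤ))]
        refine Submodule.sum_mem _ fun k hk => Submodule.smul_mem _ _ (A2 _ ?_ ?_)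
        · have := Finset.mem_range.mp hk; omega
        · exact ⟨(k : ℤ) - m - q, by push_cast; ring⟩
      · rw [rep_I2 hF (-3 * (m : ℤ) - ((3 * q + 1 : ℕ) : ℤ))]
        refine Submodule.sum_mem _ fun k hk => Submodule.smul_mem _ _ ?_
        have hk' := Finset.mem_range.mp hk
        have := g2 (m + q - k)
        rwa [show (-1 - 3 * (((m + q - k : ℕ)) : ℤ))
            = -3 * (m : ℤ) - ((3 * q + 1 : ℕ) : ℤ) + 3 * (k : ℤ) from by omega] at this
      · have := g3 q
        rwa [show (-3 * (m : ℤ) - 2 - 3 * (q : ℤ))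
            = -3 * (m : ℤ) - ((3 * q + 2 : ℕ) : ℤ) from by omega] at this
    have hW21 : W2 ≤ W1 := by
      rw [hW2def, Submodule.span_le]
      rintro x ⟨p, rfl⟩
      simp only [SetLike.mem_coe]
      rcases p with i | i | i | n <;> simp only [S2, Sum.elim_inl, Sum.elim_inr]
      · exact L1 _ (by have := i.isLt; omega) ⟨(m : ℤ) - (i : ℤ), by ring⟩
      · exact A2 _ (by omega) ⟨-(i : ℤ), by ring⟩
      · have := g2 (i : ℕ)
        rwa [show (-1 - 3 * (((i : ℕ)) : ℤ)) = -3 * (i : ℤ) - 1 from by omega] at this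
      · exact L4 n
    -- now the reverse inclusion
    have q1 : ∀ i : ℕ, i < m → zL ^ (3 * (m : ℤ) - 3 * (i : ℤ)) ∈ W2 :=
      fun i hi => Submodule.subset_span ⟨Sum.inl ⟨i, hi⟩, rfl⟩
    have q2 : ∀ i : ℕ, i < m → zL ^ (-3 * (i : ℤ)) * fSing m lam ∈ W2 :=
      fun i hi => Submodule.subset_span ⟨Sum.inr (Sum.inl ⟨i, hi⟩), rfl⟩
    have q3 : ∀ i : ℕ, i < m → zL ^ (-3 * (i : ℤ) - 1) * fSing m lam ∈ W2 :=
      fun i hi => Submodule.subset_span ⟨Sum.inr (Sum.inr (Sum.inl ⟨i, hi⟩)), rfl⟩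
    have q4 : ∀ n : ℕ, zL ^ (-3 * (m : ℤ) - (n : ℤ)) * fSing m lam ^ 2 ∈ W2 :=
      fun n => Submodule.subset_span ⟨Sum.inr (Sum.inr (Sum.inr n)), rfl⟩
    have Ma : ∀ s : ℕ, zL ^ (-3 * (s : ℤ)) * fSing m lam ∈ W2 := by
      intro s
      induction s using Nat.strong_induction_on with
      | _ s ih =>
        by_cases hs : s < m
        · exact q2 s hs
        · push_neg at hs
          have hsub : zL ^ (-3 * (s : ℤ)) * fSing m lam
              = zL ^ (-3 * (s : ℤ)) * fSing m lam ^ 2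
                - ∑ k ∈ Finset.range m,
                    c (k + 1) • (zL ^ (-3 * (s : ℤ) + 3 * (k : ℤ) + 3) * fSing m lam) := by
            rw [rep_I2' hc0 hF (-3 * (s : ℤ))]; abel
          rw [hsub]
          refine sub_mem ?_ (Submodule.sum_mem _ fun k hk => Submodule.smul_mem _ _ ?_)
          · have := q4 (3 * s - 3 * m)
            rwa [show -3 * (m : ℤ) - ((3 * s - 3 * m : ℕ) : ℤ) = -3 * (s : ℤ) from by omega]
              at this
          · have hk' := Finset.mem_range.mp hk
            have := ih (s - (k + 1)) (by omega)
            rwa [show -3 * (((s - (k + 1) : ℕ)) : ℤ) = -3 * (s : ℤ) + 3 * (k : ℤ) + 3 from by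
              omega] at this
    have Mb : ∀ s : ℕ, zL ^ (-3 * (s : ℤ) - 1) * fSing m lam ∈ W2 := by
      intro s
      induction s using Nat.strong_induction_on with
      | _ s ih =>
        by_cases hs : s < m
        · exact q3 s hs
        · push_neg at hs
          have hsub : zL ^ (-3 * (s : ℤ) - 1) * fSing m lam
              = zL ^ (-3 * (s : ℤ) - 1) * fSing m lam ^ 2
                - ∑ k ∈ Finset.range m,
                    c (k + 1) • (zL ^ (-3 * (s : ℤ) - 1 + 3 * (k : ℤ) + 3) * fSing m lam) := by
            rw [rep_I2' hc0 hF (-3 * (s : ℤ) - 1)]; abel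
          rw [hsub]
          refine sub_mem ?_ (Submodule.sum_mem _ fun k hk => Submodule.smul_mem _ _ ?_)
          · have := q4 (3 * s + 1 - 3 * m)
            rwa [show -3 * (m : ℤ) - ((3 * s + 1 - 3 * m : ℕ) : ℤ) = -3 * (s : ℤ) - 1 from by
              omega] at this
          · have hk' := Finset.mem_range.mp hk
            have := ih (s - (k + 1)) (by omega)
            rwa [show -3 * (((s - (k + 1) : ℕ)) : ℤ) - 1 = -3 * (s : ℤ) - 1 + 3 * (k : ℤ) + 3
              from by omega] at this
    have Mc : ∀ s : ℕ, zL ^ (-3 * (s : ℤ)) ∈ W2 := by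
      intro s
      induction s using Nat.strong_induction_on with
      | _ s ih =>
        have hsub : zL ^ (-3 * (s : ℤ)) = zL ^ (-3 * (s : ℤ)) * fSing m lam
            - ∑ k ∈ Finset.range m, c (k + 1) • zL ^ (-3 * (s : ℤ) + 3 * (k : ℤ) + 3) := by
          rw [rep_I1' hc0 hF (-3 * (s : ℤ))]; abel
        rw [hsub]
        refine sub_mem (Ma s) (Submodule.sum_mem _ fun k hk => Submodule.smul_mem _ _ ?_)
        have hk' := Finset.mem_range.mp hk
        by_cases hks : s ≤ k
        · have := q1 (m + s - (k + 1)) (by omega)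
          rwa [show 3 * (m : ℤ) - 3 * (((m + s - (k + 1) : ℕ)) : ℤ)
              = -3 * (s : ℤ) + 3 * (k : ℤ) + 3 from by omega] at this
        · have := ih (s - (k + 1)) (by omega)
          rwa [show -3 * (((s - (k + 1) : ℕ)) : ℤ) = -3 * (s : ℤ) + 3 * (k : ℤ) + 3 from by
            omega] at this
    have Pc : ∀ t : ℤ, t ≤ m → zL ^ (3 * t) ∈ W2 := by
      intro t ht
      rcases le_or_gt t 0 with h | h
      · have := Mc (-t).toNat
        rwa [show -3 * (((-t).toNat : ℕ) : ℤ) = 3 * t from by omega] at this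
      · have := q1 (m - t.toNat) (by omega)
        rwa [show 3 * (m : ℤ) - 3 * (((m - t.toNat : ℕ)) : ℤ) = 3 * t from by omega] at this
    have hW12 : W1 ≤ W2 := by
      rw [hW1def, Submodule.span_le]
      rintro x ((⟨i, rfl⟩ | ⟨i, rfl⟩) | ⟨i, rfl⟩)
      · simp only [SetLike.mem_coe]
        have := Pc ((m : ℤ) - (i : ℤ)) (by omega)
        rwa [show 3 * ((m : ℤ) - (i : ℤ)) = 3 * (m : ℤ) - 3 * (i : ℤ) from by ring] at this
      · simp only [SetLike.mem_coe]
        have := Mb i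
        rwa [show -3 * (i : ℤ) - 1 = -1 - 3 * (i : ℤ) from by ring] at this
      · simp only [SetLike.mem_coe]
        have := q4 (3 * i + 2)
        rwa [show -3 * (m : ℤ) - ((3 * i + 2 : ℕ) : ℤ) = -3 * (m : ℤ) - 2 - 3 * (i : ℤ) from by
          push_cast; ring] at this
    exact le_antisymm hW21 hW12

end
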